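/- Let A be a decomposable generalized tournament matrix with nontrivial clan I and let x ∈ I. Then A is inseparable if and only if the principal submatrix A[({1,…,n} \ I) ∪ {x}] is inseparable. -/
import Mathlib


def IsGTM {n : ℕ} (M : Matrix (Fin n) (Fin n) ℝ) : Prop :=
  (∀ i j, 0 ≤ M i j) ∧ M + M.transpose = (Matrix.of fun _ _ => (1 : ℝ)) - 1

def IsClan {m : Type*} (M : Matrix m m ℝ) (X : Set m) : Prop :=
  ∀ i ∈ X, ∀ j ∈ X, ∀ k ∉ X, M i k = M j k ∧ M k i = M k j

def Separable {m : Type*} (M : Matrix m m ℝ) : Prop :=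
  ∃ X Y : Set m, X.Nonempty ∧ Y.Nonempty ∧ Disjoint X Y ∧ X ∪ Y = Set.univ ∧
    IsClan M X ∧ IsClan M Y

/-- Forward direction: a separation of `A` with `x` in the first clan induces a separation of
the submatrix on `S = (univ \ I) ∪ {x}`. -/
lemma fwd_aux {n : ℕ} (A : Matrix (Fin n) (Fin n) ℝ) (I : Set (Fin n))
    (hI : IsClan A I) (hIne : I ≠ Set.univ) (x : Fin n) (hx : x ∈ I)
    (X Y : Set (Fin n)) (hYne : Y.Nonempty) (hdisj : Disjoint X Y)
    (hunion : X ∪ Y = Set.univ) (hX : IsClan A X) (hY : IsClan A Y)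
    (hxX : x ∈ X) :
    Separable (A.submatrix
      (Subtype.val : ↥((Set.univ \ I) ∪ {x}) → Fin n)
      (Subtype.val : ↥((Set.univ \ I) ∪ {x}) → Fin n)) := by
  set S : Set (Fin n) := (Set.univ \ I) ∪ {x} with hSdef
  have hxS : x ∈ S := Or.inr rfl
  by_cases hc : ∃ s : ↥S, (s : Fin n) ∈ Y
  · -- both clans meet S
    refine ⟨{b : ↥S | (b : Fin n) ∈ X}, {b : ↥S | (b : Fin n) ∈ Y}, ⟨⟨x, hxS⟩, hxX⟩,
      hc, ?_, ?_, ?_, ?_⟩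
    · rw [Set.disjoint_left]
      intro b hb hb'
      exact (Set.disjoint_left.mp hdisj) hb hb'
    · ext b
      simp only [Set.mem_union, Set.mem_setOf_eq, Set.mem_univ, iff_true]
      have : (b : Fin n) ∈ X ∪ Y := hunion.symm ▸ Set.mem_univ _
      exact this
    · intro i hi j hj k hk
      simp only [Set.mem_setOf_eq] at hi hj hk
      simpa only [Matrix.submatrix_apply] using hX i hi j hj k hk
    · intro i hi j hj k hk
      simp only [Set.mem_setOf_eq] at hi hj hk
      simpa only [Matrix.submatrix_apply] using hY i hi j hj k hk
  · -- Y misses S entirely, so Y ⊆ I \ {x}; split S as {x} and univ \ I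
    push_neg at hc
    obtain ⟨y, hy⟩ := hYne
    have hyI : y ∈ I := by
      by_contra hyI
      exact hc ⟨y, Or.inl ⟨trivial, hyI⟩⟩ hy
    have hySallX : ∀ b : ↥S, (b : Fin n) ∈ X := by
      intro b
      have : (b : Fin n) ∈ X ∪ Y := hunion.symm ▸ Set.mem_univ _
      rcases this with h | h
      · exact h
      · exact absurd h (hc b)
    obtain ⟨z, hz⟩ := Set.ne_univ_iff_exists_notMem I |>.mp hIne
    have hzS : z ∈ S := Or.inl ⟨trivial, hz⟩
    have hzx : z ≠ x := fun h => hz (h ▸ hx)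
    refine ⟨{(⟨x, hxS⟩ : ↥S)}, {b : ↥S | (b : Fin n) ≠ x}, ⟨⟨x, hxS⟩, rfl⟩,
      ⟨⟨z, hzS⟩, hzx⟩, ?_, ?_, ?_, ?_⟩
    · rw [Set.disjoint_left]
      rintro b rfl hb'
      exact hb' rfl
    · ext b
      simp only [Set.mem_union, Set.mem_singleton_iff, Set.mem_setOf_eq, Set.mem_univ, iff_true]
      by_cases h : (b : Fin n) = x
      · exact Or.inl (Subtype.ext h)
      · exact Or.inr h
    · rintro i rfl j hj k _
      rw [Set.mem_singleton_iff] at hj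
      subst hj
      exact ⟨rfl, rfl⟩
    · intro i hi j hj k hk
      simp only [Set.mem_setOf_eq, not_not] at hi hj hk
      have hiI : (i : Fin n) ∉ I := by
        rcases i.2 with h | h
        · exact h.2
        · exact absurd h hi
      have hjI : (j : Fin n) ∉ I := by
        rcases j.2 with h | h
        · exact h.2
        · exact absurd h hj
      have hyX : y ∉ X := Set.disjoint_right.mp hdisj hy
      have h1 := hX i (hySallX i) j (hySallX j) y hyX
      have h2 := hI x hx y hyI i hiI
      have h3 := hI x hx y hyI j hjI
      simp only [Matrix.submatrix_apply, hk]
      constructor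
      · rw [h2.2, h1.1, ← h3.2]
      · rw [h2.1, h1.2, ← h3.1]

/-- Backward direction: a separation of the submatrix on `S` with `x` in the first clan induces
a separation of `A`. -/
lemma back_aux {n : ℕ} (A : Matrix (Fin n) (Fin n) ℝ) (I : Set (Fin n))
    (hI : IsClan A I) (x : Fin n) (hx : x ∈ I)
    (hxS : x ∈ (Set.univ \ I) ∪ {x})
    (X' Y' : Set ↥((Set.univ \ I) ∪ {x}))
    (hYne : Y'.Nonempty) (hdisj : Disjoint X' Y')
    (hunion : X' ∪ Y' = Set.univ)
    (hX' : IsClan (A.submatrix Subtype.val Subtype.val) X')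
    (hY' : IsClan (A.submatrix Subtype.val Subtype.val) Y')
    (hxX : (⟨x, hxS⟩ : ↥((Set.univ \ I) ∪ {x})) ∈ X') :
    Separable A := by
  have hSdef : ((Set.univ \ I) ∪ {x} : Set (Fin n)) = (Set.univ \ I) ∪ {x} := rfl
  have memS : ∀ a : Fin n, a ∉ I → a ∈ ((Set.univ \ I) ∪ {x}) := fun a ha => Or.inl ⟨trivial, ha⟩
  have memSI : ∀ (b : ↥((Set.univ \ I) ∪ {x})), (b : Fin n) ∈ I → (b : Fin n) = x := by
    rintro b hb
    rcases b.2 with h | h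
    · exact absurd hb h.2
    · exact h
  obtain ⟨y0, hy0⟩ := hYne
  refine ⟨Subtype.val '' X' ∪ I, Subtype.val '' Y', ⟨x, Or.inr hx⟩,
    ⟨y0, y0, hy0, rfl⟩, ?_, ?_, ?_, ?_⟩
  · -- disjoint
    rw [Set.disjoint_left]
    rintro a ha ⟨b, hb, rfl⟩
    rcases ha with ⟨b', hb', hb'e⟩ | haI
    · have : b' = b := Subtype.val_injective hb'e
      exact Set.disjoint_left.mp hdisj (this ▸ hb') hb
    · have : (b : Fin n) = x := memSI b haI
      have hbx : b = ⟨x, hxS⟩ := Subtype.ext this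
      exact Set.disjoint_left.mp hdisj hxX (hbx ▸ hb)
  · -- union
    ext a
    simp only [Set.mem_union, Set.mem_univ, iff_true]
    by_cases haI : a ∈ I
    · exact Or.inl (Or.inr haI)
    · have haS : a ∈ ((Set.univ \ I) ∪ {x}) := memS a haI
      have : (⟨a, haS⟩ : ↥((Set.univ \ I) ∪ {x})) ∈ X' ∪ Y' := hunion.symm ▸ Set.mem_univ _
      rcases this with h | h
      · exact Or.inl (Or.inl ⟨⟨a, haS⟩, h, rfl⟩)
      · exact Or.inr ⟨⟨a, haS⟩, h, rfl⟩
  · -- X clan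
    intro i hi j hj k hk
    have hkI : k ∉ I := fun h => hk (Or.inr h)
    have hkS : k ∈ ((Set.univ \ I) ∪ {x}) := memS k hkI
    have hkX' : (⟨k, hkS⟩ : ↥((Set.univ \ I) ∪ {x})) ∉ X' := by
      intro h
      exact hk (Or.inl ⟨⟨k, hkS⟩, h, rfl⟩)
    have key : ∀ a, a ∈ Subtype.val '' X' ∪ I → A a k = A x k ∧ A k a = A k x := by
      rintro a (⟨b, hb, rfl⟩ | haI)
      · have := hX' b hb ⟨x, hxS⟩ hxX ⟨k, hkS⟩ hkX'
        simpa only [Matrix.submatrix_apply] using this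
      · by_cases hax : a = x
        · subst hax; exact ⟨rfl, rfl⟩
        · exact hI a haI x hx k hkI
    obtain ⟨hi1, hi2⟩ := key i hi
    obtain ⟨hj1, hj2⟩ := key j hj
    exact ⟨hi1.trans hj1.symm, hi2.trans hj2.symm⟩
  · -- Y clan
    rintro i ⟨bi, hbi, rfl⟩ j ⟨bj, hbj, rfl⟩ k hk
    by_cases hkS : k ∈ ((Set.univ \ I) ∪ {x})
    · have hkY' : (⟨k, hkS⟩ : ↥((Set.univ \ I) ∪ {x})) ∉ Y' := fun h => hk ⟨⟨k, hkS⟩, h, rfl⟩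
      have := hY' bi hbi bj hbj ⟨k, hkS⟩ hkY'
      simpa only [Matrix.submatrix_apply] using this
    · -- k ∈ I \ {x}
      have hkI : k ∈ I := by
        by_contra h
        exact hkS (memS k h)
      have hbiI : (bi : Fin n) ∉ I := by
        intro h
        have hbx : bi = ⟨x, hxS⟩ := Subtype.ext (memSI bi h)
        exact Set.disjoint_left.mp hdisj hxX (hbx ▸ hbi)
      have hbjI : (bj : Fin n) ∉ I := by
        intro h
        have hbx : bj = ⟨x, hxS⟩ := Subtype.ext (memSI bj h)
        exact Set.disjoint_left.mp hdisj hxX (hbx ▸ hbj)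
      have hxY' : (⟨x, hxS⟩ : ↥((Set.univ \ I) ∪ {x})) ∉ Y' := Set.disjoint_left.mp hdisj hxX
      have h1 := hY' bi hbi bj hbj ⟨x, hxS⟩ hxY'
      simp only [Matrix.submatrix_apply] at h1
      have h2 := hI k hkI x hx bi hbiI
      have h3 := hI k hkI x hx bj hbjI
      constructor
      · rw [h2.2, h1.1, ← h3.2]
      · rw [h2.1, h1.2, ← h3.1]

theorem stmt15 {n : ℕ} (A : Matrix (Fin n) (Fin n) ℝ) (hA : IsGTM A)
    (I : Set (Fin n)) (hI : IsClan A I) (hI2 : 2 ≤ I.ncard) (hIne : I ≠ Set.univ)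
    (x : Fin n) (hx : x ∈ I) :
    ¬ Separable A ↔
      ¬ Separable (A.submatrix
        (Subtype.val : ↥((Set.univ \ I) ∪ {x}) → Fin n)
        (Subtype.val : ↥((Set.univ \ I) ∪ {x}) → Fin n)) := by
  have hxS : x ∈ (Set.univ \ I) ∪ {x} := Or.inr rfl
  have key : Separable A ↔
      Separable (A.submatrix
        (Subtype.val : ↥((Set.univ \ I) ∪ {x}) → Fin n)
        (Subtype.val : ↥((Set.univ \ I) ∪ {x}) → Fin n)) := by
    constructor
    · rintro ⟨X, Y, hXne, hYne, hdisj, hunion, hX, hY⟩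
      by_cases hxX : x ∈ X
      · exact fwd_aux A I hI hIne x hx X Y hYne hdisj hunion hX hY hxX
      · have hxY : x ∈ Y := by
          have : x ∈ X ∪ Y := hunion.symm ▸ Set.mem_univ x
          rcases this with h | h
          · exact absurd h hxX
          · exact h
        exact fwd_aux A I hI hIne x hx Y X hXne hdisj.symm
          (Set.union_comm Y X ▸ hunion) hY hX hxY
    · rintro ⟨X', Y', hXne, hYne, hdisj, hunion, hX', hY'⟩
      by_cases hxX : (⟨x, hxS⟩ : ↥((Set.univ \ I) ∪ {x})) ∈ X'
      · exact back_aux A I hI x hx hxS X' Y' hYne hdisj hunion hX' hY' hxX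
      · have hxY : (⟨x, hxS⟩ : ↥((Set.univ \ I) ∪ {x})) ∈ Y' := by
          have : (⟨x, hxS⟩ : ↥((Set.univ \ I) ∪ {x})) ∈ X' ∪ Y' :=
            hunion.symm ▸ Set.mem_univ _
          rcases this with h | h
          · exact absurd h hxX
          · exact h
        exact back_aux A I hI x hx hxS Y' X' hXne hdisj.symm
          (Set.union_comm Y' X' ▸ hunion) hY' hX' hxY
  exact not_congr key
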